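/- As d → ∞ along the integers d ≥ 2, the Blaschke products B_d converge to B_∞ uniformly on compact subsets of the open unit disk 𝔻 (i.e. the sequence (B_d) tends locally uniformly on 𝔻 to B_∞). -/

import Mathlib

open Complex Filter

/-- Pointwise quantitative estimate for the Blaschke product approximation. -/
lemma blaschke_aux (r : ℝ) (hr0 : 0 ≤ r) (hr1 : r < 1) (d : ℕ)
    (hsmall : 4 / (((d : ℝ) + 1) * (1 - r)) ≤ 1 / 2)
    (hsmall2 : 40 / (((d : ℝ) + 1) * (1 - r) ^ 2) ≤ 1)
    (z : ℂ) (hz : ‖z‖ ≤ r) :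
    ‖((z + ((d : ℂ) - 1) / ((d : ℂ) + 1)) /
        (1 + (((d : ℂ) - 1) / ((d : ℂ) + 1)) * z)) ^ d -
      Complex.exp (2 * (z - 1) / (z + 1))‖ ≤
    Real.exp (4 / (1 - r)) * (80 / (((d : ℝ) + 1) * (1 - r) ^ 2)) := by
  have hrpos : 0 < 1 - r := by linarith
  have hDr : (0 : ℝ) < (d : ℝ) + 1 := by positivity
  have hD : ((d : ℂ) + 1) ≠ 0 := by
    have he : ((d : ℂ) + 1) = ((d + 1 : ℕ) : ℂ) := by push_cast; ring
    rw [he]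
    exact_mod_cast Nat.succ_ne_zero d
  have hDnorm : ‖((d : ℂ) + 1)‖ = (d : ℝ) + 1 := by
    have h' : ((d : ℂ) + 1) = (((d : ℝ) + 1 : ℝ) : ℂ) := by push_cast; ring
    rw [h', Complex.norm_real, Real.norm_eq_abs, abs_of_pos hDr]
  set a : ℂ := ((d : ℂ) - 1) / ((d : ℂ) + 1) with ha
  have hanorm : ‖a‖ ≤ 1 := by
    rw [ha, norm_div, hDnorm, div_le_one hDr]
    have h' : ((d : ℂ) - 1) = (((d : ℝ) - 1 : ℝ) : ℂ) := by push_cast; ring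
    rw [h', Complex.norm_real, Real.norm_eq_abs, abs_le]
    constructor
    · linarith [Nat.cast_nonneg (α := ℝ) d]
    · linarith
  set den : ℂ := 1 + a * z with hden
  have hmul : ((d : ℂ) + 1) * den = ((d : ℂ) + 1) + ((d : ℂ) - 1) * z := by
    rw [hden, ha]
    field_simp
  have hdennorm : 1 - r ≤ ‖den‖ := by
    have h1 : ‖a * z‖ ≤ r := by
      rw [norm_mul]
      calc ‖a‖ * ‖z‖ ≤ 1 * r := mul_le_mul hanorm hz (norm_nonneg _) zero_le_one
        _ = r := one_mul r
    calc 1 - r ≤ ‖(1 : ℂ)‖ - ‖-(a * z)‖ := by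
          rw [norm_one, norm_neg]; linarith
      _ ≤ ‖1 - -(a * z)‖ := norm_sub_norm_le _ _
      _ = ‖den‖ := by rw [hden, sub_neg_eq_add]
  have hden0 : den ≠ 0 := by
    intro h0
    rw [h0, norm_zero] at hdennorm; linarith
  have hden0' : ((d : ℂ) + 1) + ((d : ℂ) - 1) * z ≠ 0 := by
    rw [← hmul]; exact mul_ne_zero hD hden0
  have hz1norm : 1 - r ≤ ‖z + 1‖ := by
    calc 1 - r ≤ ‖(1 : ℂ)‖ - ‖-z‖ := by rw [norm_one, norm_neg]; linarith
      _ ≤ ‖1 - -z‖ := norm_sub_norm_le _ _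
      _ = ‖z + 1‖ := by rw [sub_neg_eq_add, add_comm]
  have hz10 : z + 1 ≠ 0 := by
    intro h0; rw [h0, norm_zero] at hz1norm; linarith
  set h : ℂ := 2 * (z - 1) / (((d : ℂ) + 1) * den) with hh
  -- the base equals 1 + h
  have hbase : (z + a) / (1 + a * z) = 1 + h := by
    rw [hh, hden, ha]
    have hq : (d : ℂ) + 1 + z * ((d : ℂ) - 1) ≠ 0 := by rw [mul_comm]; exact hden0'
    field_simp
    ring
  -- norm bound on h
  have hzm1 : ‖z - 1‖ ≤ 2 := by
    calc ‖z - 1‖ ≤ ‖z‖ + ‖(1 : ℂ)‖ := norm_sub_le _ _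
      _ ≤ r + 1 := by rw [norm_one]; linarith
      _ ≤ 2 := by linarith
  have h2norm : ‖(2 : ℂ)‖ = 2 := by norm_num
  have hprod : ‖((d : ℂ) + 1) * den‖ = ((d : ℝ) + 1) * ‖den‖ := by
    rw [norm_mul, hDnorm]
  have hhnorm : ‖h‖ ≤ 4 / (((d : ℝ) + 1) * (1 - r)) := by
    rw [hh, norm_div, hprod]
    apply div_le_div₀ (by norm_num) ?_ (by positivity) ?_
    · rw [norm_mul, h2norm]; linarith
    · exact mul_le_mul_of_nonneg_left hdennorm hDr.le
  have hh2 : ‖h‖ ≤ 1 / 2 := hhnorm.trans hsmall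
  have hw0 : (1 : ℂ) + h ≠ 0 := by
    intro h0
    have hhe : h = -1 := by linear_combination h0
    rw [hhe, norm_neg, norm_one] at hh2; norm_num at hh2
  set u : ℂ := (d : ℂ) * Complex.log (1 + h) with hu
  set g : ℂ := 2 * (z - 1) / (z + 1) with hg
  have hpow : ((z + a) / (1 + a * z)) ^ d = Complex.exp u := by
    rw [hbase, hu, Complex.exp_nat_mul, Complex.exp_log hw0]
  -- second order term
  have hlog : ‖Complex.log (1 + h) - h‖ ≤ ‖h‖ ^ 2 := by
    have hlt : ‖h‖ < 1 := lt_of_le_of_lt hh2 (by norm_num)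
    have hb := Complex.norm_log_one_add_sub_self_le hlt
    have hinv : (1 - ‖h‖)⁻¹ ≤ 2 := by
      have h12 : (1 : ℝ) / 2 ≤ 1 - ‖h‖ := by linarith
      calc (1 - ‖h‖)⁻¹ ≤ ((1 : ℝ) / 2)⁻¹ := by
            apply inv_anti₀ (by norm_num) h12
        _ = 2 := by norm_num
    nlinarith [sq_nonneg ‖h‖, norm_nonneg h]
  have hterm1 : ‖(d : ℂ) * (Complex.log (1 + h) - h)‖ ≤
      16 / (((d : ℝ) + 1) * (1 - r) ^ 2) := by
    rw [norm_mul, Complex.norm_natCast]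
    have hsq : ‖h‖ ^ 2 ≤ (4 / (((d : ℝ) + 1) * (1 - r))) ^ 2 :=
      pow_le_pow_left₀ (norm_nonneg _) hhnorm 2
    calc (d : ℝ) * ‖Complex.log (1 + h) - h‖
        ≤ ((d : ℝ) + 1) * ‖h‖ ^ 2 := by
          apply mul_le_mul (by linarith) hlog (norm_nonneg _) hDr.le
      _ ≤ ((d : ℝ) + 1) * (4 / (((d : ℝ) + 1) * (1 - r))) ^ 2 :=
          mul_le_mul_of_nonneg_left hsq hDr.le
      _ = 16 / (((d : ℝ) + 1) * (1 - r) ^ 2) := by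
          field_simp
          ring
  -- first order term
  have hterm2 : (d : ℂ) * h - g = 2 * (z - 1) ^ 2 / (((d : ℂ) + 1) * den * (z + 1)) := by
    rw [hh, hg, hden, ha]
    have hq : (d : ℂ) + 1 + z * ((d : ℂ) - 1) ≠ 0 := by rw [mul_comm]; exact hden0'
    field_simp
    ring
  have hterm2norm : ‖(d : ℂ) * h - g‖ ≤ 8 / (((d : ℝ) + 1) * (1 - r) ^ 2) := by
    have hprod3 : ‖((d : ℂ) + 1) * den * (z + 1)‖ = ((d : ℝ) + 1) * ‖den‖ * ‖z + 1‖ := by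
      rw [norm_mul, hprod]
    rw [hterm2, norm_div, hprod3]
    apply div_le_div₀ (by norm_num) ?_ (by positivity) ?_
    · rw [norm_mul, norm_pow, h2norm]
      nlinarith [norm_nonneg (z - 1)]
    · 
      have hp : (1 - r) * (1 - r) ≤ ‖den‖ * ‖z + 1‖ :=
        mul_le_mul hdennorm hz1norm hrpos.le (norm_nonneg _)
      calc ((d : ℝ) + 1) * (1 - r) ^ 2 = ((d : ℝ) + 1) * ((1 - r) * (1 - r)) := by ring
        _ ≤ ((d : ℝ) + 1) * (‖den‖ * ‖z + 1‖) :=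
            mul_le_mul_of_nonneg_left hp hDr.le
        _ = ((d : ℝ) + 1) * ‖den‖ * ‖z + 1‖ := by ring
  have hug : ‖u - g‖ ≤ 24 / (((d : ℝ) + 1) * (1 - r) ^ 2) := by
    have hsplit : u - g = (d : ℂ) * (Complex.log (1 + h) - h) + ((d : ℂ) * h - g) := by
      rw [hu]; ring
    calc ‖u - g‖ ≤ ‖(d : ℂ) * (Complex.log (1 + h) - h)‖ + ‖(d : ℂ) * h - g‖ := by
          rw [hsplit]; exact norm_add_le _ _
      _ ≤ 16 / (((d : ℝ) + 1) * (1 - r) ^ 2) + 8 / (((d : ℝ) + 1) * (1 - r) ^ 2) :=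
          add_le_add hterm1 hterm2norm
      _ = 24 / (((d : ℝ) + 1) * (1 - r) ^ 2) := by ring
  have hgnorm : ‖g‖ ≤ 4 / (1 - r) := by
    rw [hg, norm_div]
    apply div_le_div₀ (by norm_num) ?_ hrpos hz1norm
    rw [norm_mul, h2norm]; linarith
  -- combine via the exponential
  have hexp : Complex.exp u - Complex.exp g = Complex.exp g * (Complex.exp (u - g) - 1) := by
    rw [mul_sub, ← Complex.exp_add, mul_one]
    congr 2
    ring
  have hug1 : ‖u - g‖ ≤ 1 := by
    calc ‖u - g‖ ≤ 24 / (((d : ℝ) + 1) * (1 - r) ^ 2) := hug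
      _ ≤ 40 / (((d : ℝ) + 1) * (1 - r) ^ 2) := by
          gcongr <;> norm_num
      _ ≤ 1 := hsmall2
  have hE1 : ‖Complex.exp g‖ ≤ Real.exp (4 / (1 - r)) := by
    rw [Complex.norm_exp]
    apply Real.exp_le_exp.mpr
    calc g.re ≤ ‖g‖ := Complex.re_le_norm g
      _ ≤ 4 / (1 - r) := hgnorm
  have hE2 : ‖Complex.exp (u - g) - 1‖ ≤ 2 * ‖u - g‖ := by
    have := Complex.norm_exp_sub_one_le (x := u - g) hug1
    simpa using this
  calc ‖((z + a) / (1 + a * z)) ^ d - Complex.exp g‖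
      = ‖Complex.exp g‖ * ‖Complex.exp (u - g) - 1‖ := by
        rw [hpow, hexp, norm_mul]
    _ ≤ Real.exp (4 / (1 - r)) * (2 * (24 / (((d : ℝ) + 1) * (1 - r) ^ 2))) := by
        apply mul_le_mul hE1 ?_ (norm_nonneg _) (Real.exp_nonneg _)
        calc ‖Complex.exp (u - g) - 1‖ ≤ 2 * ‖u - g‖ := hE2
          _ ≤ 2 * (24 / (((d : ℝ) + 1) * (1 - r) ^ 2)) := by linarith
    _ ≤ Real.exp (4 / (1 - r)) * (80 / (((d : ℝ) + 1) * (1 - r) ^ 2)) := by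
        apply mul_le_mul_of_nonneg_left ?_ (Real.exp_nonneg _)
        rw [← mul_div_assoc]
        gcongr <;> norm_num

/-- As `d → ∞`, the Blaschke products `B_d(z) = ((z + a_d)/(1 + a_d z))^d`,
with `a_d = (d-1)/(d+1)`, converge to `B_∞(z) = exp(2(z-1)/(z+1))` uniformly
on compact subsets of the open unit disk. -/
theorem blaschke_tendsto_Binf :
    ∀ K ⊆ Metric.ball (0 : ℂ) 1, IsCompact K →
      TendstoUniformlyOn
        (fun (d : ℕ) (z : ℂ) => ((z + ((d : ℂ) - 1) / ((d : ℂ) + 1)) /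
            (1 + (((d : ℂ) - 1) / ((d : ℂ) + 1)) * z)) ^ d)
        (fun z : ℂ => Complex.exp (2 * (z - 1) / (z + 1)))
        Filter.atTop K := by
  intro K hK hKc
  rcases K.eq_empty_or_nonempty with rfl | hne
  · exact tendstoUniformlyOn_empty
  obtain ⟨x0, hx0K, hx0⟩ := hKc.exists_isMaxOn hne continuous_norm.continuousOn
  set r : ℝ := ‖x0‖ with hr
  have hr0 : 0 ≤ r := norm_nonneg _
  have hr1 : r < 1 := by
    have := hK hx0K
    simpa [Metric.mem_ball, dist_zero_right] using this
  have hrpos : 0 < 1 - r := by linarith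
  rw [Metric.tendstoUniformlyOn_iff]
  intro ε hε
  set C : ℝ := Real.exp (4 / (1 - r)) * 80 / (1 - r) ^ 2 with hC
  have hCpos : 0 < C := by rw [hC]; positivity
  obtain ⟨N, hN⟩ := exists_nat_gt (max (max (8 / (1 - r)) (40 / (1 - r) ^ 2)) (C / ε))
  rw [eventually_atTop]
  refine ⟨N, fun d hd z hzK => ?_⟩
  have hdN : (N : ℝ) ≤ (d : ℝ) := Nat.cast_le.mpr hd
  have hDr : (0 : ℝ) < (d : ℝ) + 1 := by positivity
  have hA : 8 / (1 - r) ≤ max (max (8 / (1 - r)) (40 / (1 - r) ^ 2)) (C / ε) :=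
    le_max_of_le_left (le_max_left _ _)
  have hB : 40 / (1 - r) ^ 2 ≤ max (max (8 / (1 - r)) (40 / (1 - r) ^ 2)) (C / ε) :=
    le_max_of_le_left (le_max_right _ _)
  have hC' : C / ε ≤ max (max (8 / (1 - r)) (40 / (1 - r) ^ 2)) (C / ε) :=
    le_max_right _ _
  have h1 : 8 / (1 - r) < (d : ℝ) + 1 := by linarith
  have h2 : 40 / (1 - r) ^ 2 < (d : ℝ) + 1 := by linarith
  have h3 : C / ε < (d : ℝ) + 1 := by linarith
  have hsmall : 4 / (((d : ℝ) + 1) * (1 - r)) ≤ 1 / 2 := by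
    rw [div_le_div_iff₀ (by positivity) (by norm_num)]
    have h8 : 8 < ((d : ℝ) + 1) * (1 - r) := by
      rw [div_lt_iff₀ hrpos] at h1; linarith
    nlinarith
  have hsmall2 : 40 / (((d : ℝ) + 1) * (1 - r) ^ 2) ≤ 1 := by
    rw [div_le_one (by positivity)]
    rw [div_lt_iff₀ (by positivity)] at h2
    nlinarith
  have hz : ‖z‖ ≤ r := hx0 hzK
  rw [dist_eq_norm, norm_sub_rev]
  calc ‖((z + ((d : ℂ) - 1) / ((d : ℂ) + 1)) /
        (1 + (((d : ℂ) - 1) / ((d : ℂ) + 1)) * z)) ^ d -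
      Complex.exp (2 * (z - 1) / (z + 1))‖
      ≤ Real.exp (4 / (1 - r)) * (80 / (((d : ℝ) + 1) * (1 - r) ^ 2)) :=
        blaschke_aux r hr0 hr1 d hsmall hsmall2 z hz
    _ = C / ((d : ℝ) + 1) := by rw [hC]; field_simp
    _ < ε := by
        rw [div_lt_iff₀ hDr]
        rw [div_lt_iff₀ hε] at h3
        nlinarith
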